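/- Let $n, k, j$ be non-negative integers satisfying $n/2 \geq k \geq j$ (i.e. $2k \leq n$ and $j \leq k$). Then the rational number $\sum_{i=0}^{k-j} \frac{(-1)^{i}\,(n-2k+2i+1)\,(n-2k+i)!}{i!\,(k-i-j)!\,(n-k+i-j+1)!}$ equals $0$ if $k > j$, and equals $1$ if $k = j$. -/

import Mathlib

set_option maxHeartbeats 1000000

/-- telescoping antidifference -/
noncomputable def Faux (a m i : ℕ) : ℚ :=
  ((-1 : ℚ) ^ (i + 1) * i * ((a : ℚ) + m + i + 1) * (Nat.factorial (a + i))) /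
    ((m : ℚ) * (Nat.factorial i) * (Nat.factorial (m - i)) * (Nat.factorial (a + m + i + 1)))

lemma step_aux (a m i : ℕ) (hi : i < m) :
    ((-1 : ℚ) ^ i * ((a : ℚ) + 2 * i + 1) * (Nat.factorial (a + i))) /
      ((Nat.factorial i) * (Nat.factorial (m - i)) * (Nat.factorial (a + m + i + 1)))
    = Faux a m (i + 1) - Faux a m i := by
  obtain ⟨b, rfl⟩ : ∃ b, m = b + i + 1 := ⟨m - i - 1, by omega⟩
  unfold Faux
  have h1 : b + i + 1 - i = b + 1 := by omega
  have h2 : b + i + 1 - (i + 1) = b := by omega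
  have e1 : a + (i + 1) = (a + i) + 1 := by omega
  have e2 : a + (b + i + 1) + (i + 1) + 1 = ((a + (b + i + 1) + i) + 1) + 1 := by omega
  have e3 : a + (b + i + 1) + i + 1 = (a + (b + i + 1) + i) + 1 := rfl
  rw [h1, h2, e1, e2, e3]
  simp only [Nat.factorial_succ]
  have hA : ((Nat.factorial (a + i) : ℚ)) ≠ 0 := Nat.cast_ne_zero.mpr (Nat.factorial_ne_zero _)
  have hI : ((Nat.factorial i : ℚ)) ≠ 0 := Nat.cast_ne_zero.mpr (Nat.factorial_ne_zero _)
  have hB : ((Nat.factorial b : ℚ)) ≠ 0 := Nat.cast_ne_zero.mpr (Nat.factorial_ne_zero _)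
  have hC : ((Nat.factorial (a + (b + i + 1) + i) : ℚ)) ≠ 0 :=
    Nat.cast_ne_zero.mpr (Nat.factorial_ne_zero _)
  push_cast
  have hb1 : ((b : ℚ) + 1) ≠ 0 := by positivity
  have hi1 : ((i : ℚ) + 1) ≠ 0 := by positivity
  have hm : ((b : ℚ) + i + 1) ≠ 0 := by positivity
  have hc1 : ((a : ℚ) + (b + i + 1) + i + 1) ≠ 0 := by positivity
  have hc2 : ((a : ℚ) + (b + i + 1) + i + 1 + 1) ≠ 0 := by positivity
  field_simp
  ring

lemma sum_aux (a m : ℕ) :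
    (∑ i ∈ Finset.range (m + 1),
      ((-1 : ℚ) ^ i * ((a : ℚ) + 2 * i + 1) * (Nat.factorial (a + i))) /
        ((Nat.factorial i) * (Nat.factorial (m - i)) * (Nat.factorial (a + m + i + 1))))
    = if 0 < m then 0 else 1 := by
  rcases Nat.eq_zero_or_pos m with hm | hm
  · subst hm
    rw [if_neg (by omega), Finset.sum_range_one]
    have e : a + 0 + 0 + 1 = (a + 0 + 0) + 1 := rfl
    rw [e]
    simp only [Nat.factorial_succ, Nat.sub_zero, Nat.factorial_zero, Nat.add_zero]
    have hA : ((Nat.factorial a : ℚ)) ≠ 0 := Nat.cast_ne_zero.mpr (Nat.factorial_ne_zero _)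
    have ha1 : ((a : ℚ) + 1) ≠ 0 := by positivity
    push_cast
    field_simp
    ring
  · rw [if_pos hm]
    rw [Finset.sum_range_succ]
    rw [Finset.sum_congr rfl (fun i hi => step_aux a m i (Finset.mem_range.mp hi))]
    rw [Finset.sum_range_sub (Faux a m)]
    have hF0 : Faux a m 0 = 0 := by simp [Faux]
    rw [hF0, sub_zero]
    unfold Faux
    have h1 : m - m = 0 := by omega
    have e2 : a + m + m + 1 = (a + m + m) + 1 := rfl
    rw [h1, e2]
    simp only [Nat.factorial_succ, Nat.factorial_zero]
    have hA : ((Nat.factorial (a + m) : ℚ)) ≠ 0 := Nat.cast_ne_zero.mpr (Nat.factorial_ne_zero _)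
    have hM : ((Nat.factorial m : ℚ)) ≠ 0 := Nat.cast_ne_zero.mpr (Nat.factorial_ne_zero _)
    have hC : ((Nat.factorial (a + m + m) : ℚ)) ≠ 0 := Nat.cast_ne_zero.mpr (Nat.factorial_ne_zero _)
    have hm' : ((m : ℚ)) ≠ 0 := Nat.cast_ne_zero.mpr (by omega)
    push_cast
    have hc1 : ((a : ℚ) + m + m + 1) ≠ 0 := by positivity
    field_simp
    ring

theorem stmt_0 (n k j : ℕ) (h2k : 2 * k ≤ n) (hjk : j ≤ k) :
    (∑ i ∈ Finset.range (k - j + 1),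
      ((-1 : ℚ) ^ i * (n - 2 * k + 2 * i + 1) * (Nat.factorial (n - 2 * k + i))) /
        ((Nat.factorial i) * (Nat.factorial (k - i - j)) *
          (Nat.factorial (n - k + i - j + 1))))
      = if j < k then 0 else 1 := by
  have key := sum_aux (n - 2 * k) (k - j)
  have hcast : ((n - 2 * k : ℕ) : ℚ) = (n : ℚ) - 2 * k := by
    push_cast [Nat.cast_sub h2k]; ring
  rw [Finset.sum_congr rfl (fun i hi => ?_)] at key
  · rw [key]
    by_cases h : j < k
    · rw [if_pos h, if_pos (by omega)]
    · rw [if_neg h, if_neg (by omega)]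
  · have e1 : k - j - i = k - i - j := by omega
    have e2 : n - 2 * k + (k - j) + i + 1 = n - k + i - j + 1 := by omega
    rw [e1, e2, hcast]
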